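/- Let n, s, k be positive integers with k ≥ 2, s ≥ 1, n ≡ k (mod 2), and n + 1 − 2s − k ≥ 1. Then the matching number of the graph K_s ∨ (K_{n+1−2s−k} ∪ \overline{K_{s+k−1}}) (which has n vertices) is at most (n−k)/2. -/

import Mathlib

open scoped Classical

/-- The matching number of a graph: the maximum number of pairwise disjoint edges. -/
noncomputable def matchingNumber {V : Type*} [Fintype V] (G : SimpleGraph V) : ℕ :=
  sSup {m : ℕ | ∃ M : G.Subgraph, M.IsMatching ∧ M.edgeSet.ncard = m}

/-- The graph `K_s ∨ (K_{n+1-2s-k} ∪ (K_{s+k-1})ᶜ)` on `Fin n`: the first `s`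
vertices form a clique joined to everything, the vertices with index in
`[s, n+1-s-k)` form a clique of size `n+1-2s-k`, and the remaining `s+k-1`
vertices form an independent set. -/
def cliqueJoinGraph (n s k : ℕ) : SimpleGraph (Fin n) where
  Adj u v := u ≠ v ∧ ((u : ℕ) < s ∨ (v : ℕ) < s ∨
    ((u : ℕ) < n + 1 - s - k ∧ (v : ℕ) < n + 1 - s - k))
  symm := by
    constructor
    rintro u v ⟨h1, h2⟩
    exact ⟨h1.symm, by tauto⟩
  loopless := by
    constructor
    rintro u ⟨h, -⟩
    exact h rfl

theorem stmt_13 (n s k : ℕ) (hk : 2 ≤ k) (hs : 1 ≤ s) (hmod : n % 2 = k % 2)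
    (hns : 2 * s + k ≤ n) :
    (matchingNumber (cliqueJoinGraph n s k) : ℝ) ≤ ((n : ℝ) - k) / 2 := by
  have hkn : k ≤ n := by omega
  -- main combinatorial bound: any matching has at most (n-k)/2 edges
  have key : ∀ M : (cliqueJoinGraph n s k).Subgraph, M.IsMatching →
      2 * M.edgeSet.ncard ≤ n - k := by
    intro M hM
    -- edges containing a given vertex are unique
    have uniq_edge : ∀ {e₁ e₂ : Sym2 (Fin n)} {v : Fin n}, e₁ ∈ M.edgeSet →
        e₂ ∈ M.edgeSet → v ∈ e₁ → v ∈ e₂ → e₁ = e₂ := by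
      intro e₁ e₂ v h1 h2 hv1 hv2
      obtain ⟨w₁, rfl⟩ := Sym2.mem_iff_exists.mp hv1
      obtain ⟨w₂, rfl⟩ := Sym2.mem_iff_exists.mp hv2
      have a1 : M.Adj v w₁ := h1
      have a2 : M.Adj v w₂ := h2
      obtain ⟨w, -, huniq⟩ := hM (M.edge_vert a1)
      rw [huniq w₁ a1, huniq w₂ a2]
    have mem_inf : ∀ e : Sym2 (Fin n), e.inf ∈ e := by
      intro e
      induction e using Sym2.ind with
      | _ a b =>
        rcases le_total a b with h | h <;>
          simp [Sym2.inf_mk, min_def, Sym2.mem_iff] <;> omega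
    have mem_sup : ∀ e : Sym2 (Fin n), e.sup ∈ e := by
      intro e
      induction e using Sym2.ind with
      | _ a b =>
        rcases le_total a b with h | h <;>
          simp [Sym2.sup_mk, max_def, Sym2.mem_iff] <;> omega
    have inf_ne_sup : ∀ e ∈ M.edgeSet, e.inf ≠ e.sup := by
      intro e he
      induction e using Sym2.ind with
      | _ a b =>
        have : M.Adj a b := he
        have hab : a ≠ b := (M.adj_sub this).ne
        simp only [Sym2.inf_mk, Sym2.sup_mk]
        rcases le_total a b with h | h
        · rw [inf_eq_left.mpr h, sup_eq_right.mpr h]; exact hab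
        · rw [inf_eq_right.mpr h, sup_eq_left.mpr h]; exact hab.symm
    have endpt_vert : ∀ e ∈ M.edgeSet, ∀ v ∈ e, v ∈ M.verts := by
      intro e he v hv
      obtain ⟨w, rfl⟩ := Sym2.mem_iff_exists.mp hv
      exact M.edge_vert (show M.Adj v w from he)
    -- step 1: 2 * #edges ≤ #verts
    have hfinE : M.edgeSet.Finite := Set.toFinite _
    have hfinV : M.verts.Finite := Set.toFinite _
    have step1 : 2 * M.edgeSet.ncard ≤ M.verts.ncard := by
      classical
      set F : Finset (Sym2 (Fin n)) := hfinE.toFinset with hF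
      set W : Finset (Fin n) := hfinV.toFinset with hW
      have hFE : ∀ e, e ∈ F ↔ e ∈ M.edgeSet := fun e => hfinE.mem_toFinset
      have hWE : ∀ v, v ∈ W ↔ v ∈ M.verts := fun v => hfinV.mem_toFinset
      have hinjinf : Set.InjOn Sym2.inf (F : Set (Sym2 (Fin n))) := by
        intro e₁ h1 e₂ h2 heq
        exact uniq_edge ((hFE e₁).mp h1) ((hFE e₂).mp h2) (mem_inf e₁)
          (heq ▸ mem_inf e₂)
      have hinjsup : Set.InjOn Sym2.sup (F : Set (Sym2 (Fin n))) := by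
        intro e₁ h1 e₂ h2 heq
        exact uniq_edge ((hFE e₁).mp h1) ((hFE e₂).mp h2) (mem_sup e₁)
          (heq ▸ mem_sup e₂)
      have hdisj : Disjoint (F.image Sym2.inf) (F.image Sym2.sup) := by
        rw [Finset.disjoint_left]
        intro v hv1 hv2
        obtain ⟨e₁, he₁, rfl⟩ := Finset.mem_image.mp hv1
        obtain ⟨e₂, he₂, heq⟩ := Finset.mem_image.mp hv2
        have : e₂ = e₁ := uniq_edge ((hFE e₂).mp he₂) ((hFE e₁).mp he₁)
          (heq ▸ mem_sup e₂) (mem_inf e₁)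
        exact inf_ne_sup e₁ ((hFE e₁).mp he₁) (this ▸ heq.symm)
      have hsub : F.image Sym2.inf ∪ F.image Sym2.sup ⊆ W := by
        intro v hv
        rcases Finset.mem_union.mp hv with hv | hv
        · obtain ⟨e, he, rfl⟩ := Finset.mem_image.mp hv
          exact (hWE _).mpr (endpt_vert e ((hFE e).mp he) _ (mem_inf e))
        · obtain ⟨e, he, rfl⟩ := Finset.mem_image.mp hv
          exact (hWE _).mpr (endpt_vert e ((hFE e).mp he) _ (mem_sup e))
      have hcard : (F.image Sym2.inf ∪ F.image Sym2.sup).card = 2 * F.card := by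
        rw [Finset.card_union_of_disjoint hdisj,
          Finset.card_image_of_injOn hinjinf, Finset.card_image_of_injOn hinjsup]
        ring
      have := Finset.card_le_card hsub
      rw [hcard] at this
      rwa [Set.ncard_eq_toFinset_card _ hfinE, Set.ncard_eq_toFinset_card _ hfinV]
    -- step 2: #verts ≤ (n+1-s-k) + s
    have hIio : ∀ t : ℕ, (Set.Iio t).ncard = t := by
      intro t
      rw [← Nat.card_coe_set_eq, Nat.card_eq_fintype_card, ← Set.toFinset_card, Set.toFinset_Iio, Nat.card_Iio]
    have hst : s < n + 1 - s - k := by omega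
    -- partner function
    set p : Fin n → Fin n := fun v =>
      if h : v ∈ M.verts then (hM h).choose else v with hp
    have hpadj : ∀ v (h : v ∈ M.verts), M.Adj v (p v) := by
      intro v h
      simp only [hp, dif_pos h]
      exact (hM h).choose_spec.1
    have step2a : (M.verts ∩ {v : Fin n | ¬ (v : ℕ) < n + 1 - s - k}).ncard ≤ s := by
      have := Set.ncard_le_ncard_of_injOn (fun v : Fin n => ((p v : Fin n) : ℕ))
        (s := M.verts ∩ {v : Fin n | ¬ (v : ℕ) < n + 1 - s - k}) (t := Set.Iio s)
        (by
          rintro v ⟨hv, hv2⟩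
          have hadj := hpadj v hv
          obtain ⟨hne, hor⟩ := M.adj_sub hadj
          simp only [Set.mem_setOf_eq] at hv2
          have : ((p v : Fin n) : ℕ) < s := by
            rcases hor with h | h | ⟨h, -⟩
            · omega
            · exact h
            · omega
          exact Set.mem_Iio.mpr this)
        (by
          rintro v₁ ⟨hv₁, -⟩ v₂ ⟨hv₂, -⟩ heq
          have heq' : p v₁ = p v₂ := Fin.val_injective heq
          have h1 : M.Adj v₁ (p v₁) := hpadj v₁ hv₁
          have h2 : M.Adj v₂ (p v₁) := heq' ▸ hpadj v₂ hv₂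
          obtain ⟨u, -, huniq⟩ := hM (M.edge_vert h1.symm)
          rw [huniq v₁ h1.symm, huniq v₂ h2.symm])
        (Set.finite_Iio s)
      rwa [hIio s] at this
    have step2b : (M.verts ∩ {v : Fin n | (v : ℕ) < n + 1 - s - k}).ncard
        ≤ n + 1 - s - k := by
      have := Set.ncard_le_ncard_of_injOn (fun v : Fin n => (v : ℕ))
        (s := M.verts ∩ {v : Fin n | (v : ℕ) < n + 1 - s - k})
        (t := Set.Iio (n + 1 - s - k))
        (by rintro v ⟨-, hv⟩; exact Set.mem_Iio.mpr hv)
        (fun v₁ _ v₂ _ heq => Fin.val_injective heq)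
        (Set.finite_Iio _)
      rwa [hIio _] at this
    have hsplit : M.verts.ncard ≤ (n + 1 - s - k) + s := by
      have hun : M.verts = (M.verts ∩ {v : Fin n | (v : ℕ) < n + 1 - s - k})
          ∪ (M.verts ∩ {v : Fin n | ¬ (v : ℕ) < n + 1 - s - k}) := by
        rw [show {v : Fin n | ¬ (v : ℕ) < n + 1 - s - k} = {v : Fin n | (v : ℕ) < n + 1 - s - k}ᶜ from (Set.compl_setOf _).symm]
        exact (Set.inter_union_compl _ _).symm
      calc M.verts.ncard
          ≤ (M.verts ∩ {v : Fin n | (v : ℕ) < n + 1 - s - k}).ncard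
            + (M.verts ∩ {v : Fin n | ¬ (v : ℕ) < n + 1 - s - k}).ncard := by
            conv_lhs => rw [hun]
            exact Set.ncard_union_le _ _
        _ ≤ (n + 1 - s - k) + s := Nat.add_le_add step2b step2a
    -- combine with parity
    have := le_trans step1 hsplit
    omega
  -- conclude
  have hbound : matchingNumber (cliqueJoinGraph n s k) ≤ (n - k) / 2 := by
    apply csSup_le'
    rintro m ⟨M, hM, rfl⟩
    have := key M hM
    omega
  have hpar : 2 * ((n - k) / 2) = n - k := by omega
  have h1 : (matchingNumber (cliqueJoinGraph n s k) : ℝ) ≤ (((n - k) / 2 : ℕ) : ℝ) :=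
    Nat.cast_le.mpr hbound
  have h2 : ((((n - k) / 2 : ℕ)) : ℝ) = ((n : ℝ) - k) / 2 := by
    have hq : (((n - k : ℕ)) : ℝ) = (n : ℝ) - k := by
      push_cast [Nat.cast_sub hkn]; ring
    have h3 : ((2 * ((n - k) / 2) : ℕ) : ℝ) = ((n - k : ℕ) : ℝ) := by
      exact_mod_cast congrArg (Nat.cast : ℕ → ℝ) hpar
    push_cast at h3
    rw [hq] at h3
    linarith
  linarith [h2 ▸ h1]
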